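/- Let W be symmetric doubly stochastic and y_1,…,y_n ∈ ℝ^d with mean ȳ = (1/n)∑_i y_i. Then ∑_{i,j} w_{ij} ‖y_i − y_j‖² ≥ 2(1 − σ₂(W)) ∑_i ‖y_i − ȳ‖², where σ₂(W) is the second largest singular value of W. -/

import Mathlib

/-- The `k`-th largest singular value (0-indexed) of a real square matrix. -/
noncomputable def singularValue {n : ℕ} (A : Matrix (Fin n) (Fin n) ℝ) (k : Fin n) : ℝ :=
  (fun i => Real.sqrt ((Matrix.isHermitian_conjTranspose_mul_self A).eigenvalues i))
    (Tuple.sort (fun i => Real.sqrt ((Matrix.isHermitian_conjTranspose_mul_self A).eigenvalues i))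
      k.rev)

open Matrix Finset
open scoped RealInnerProductSpace

section core
variable {n : ℕ}

lemma contraction (W : Matrix (Fin n) (Fin n) ℝ)
    (hnonneg : ∀ i j, 0 ≤ W i j)
    (hrow : ∀ i, ∑ j, W i j = 1) (hcol : ∀ j, ∑ i, W i j = 1)
    (x : Fin n → ℝ) : ∑ i, (W.mulVec x i) ^ 2 ≤ ∑ i, (x i) ^ 2 := by
  calc ∑ i, (W.mulVec x i) ^ 2 ≤ ∑ i, ∑ j, W i j * (x j) ^ 2 := by
        refine Finset.sum_le_sum fun i _ => ?_
        have := Finset.sum_sq_le_sum_mul_sum_of_sq_eq_mul Finset.univ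
          (r := fun j => W i j * x j) (f := fun j => W i j) (g := fun j => W i j * x j ^ 2)
          (fun j _ => hnonneg i j) (fun j _ => mul_nonneg (hnonneg i j) (sq_nonneg _))
          (fun j _ => by ring)
        simpa [Matrix.mulVec, dotProduct, hrow i] using this
    _ = ∑ j, (x j) ^ 2 := by
        rw [Finset.sum_comm]
        simp_rw [← Finset.sum_mul]
        simp [hcol]

/-- Core spectral bound. -/
lemma core_bound (hn : 2 ≤ n) (W : Matrix (Fin n) (Fin n) ℝ)
    (hnonneg : ∀ i j, 0 ≤ W i j)
    (hrow : ∀ i, ∑ j, W i j = 1) (hcol : ∀ j, ∑ i, W i j = 1)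
    (x : Fin n → ℝ) (hx0 : ∑ i, x i = 0) :
    ∑ i, ∑ j, W i j * x i * x j
      ≤ singularValue W ⟨1, lt_of_lt_of_le one_lt_two hn⟩ * ∑ i, x i ^ 2 := by
  classical
  have hM : (Wᴴ * W).IsHermitian := Matrix.isHermitian_conjTranspose_mul_self W
  set b := hM.eigenvectorBasis with hb
  set μ := hM.eigenvalues with hμdef
  set g : Fin n → ℝ := fun i => Real.sqrt (μ i) with hgdef
  set σ : ℝ := singularValue W ⟨1, by omega⟩ with hσdef
  have hσg : σ = g (Tuple.sort g (Fin.rev ⟨1, by omega⟩)) := rfl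
  have hσ0 : 0 ≤ σ := by rw [hσg]; exact Real.sqrt_nonneg _
  have hrev : (Fin.rev (⟨1, by omega⟩ : Fin n)) = ⟨n-2, by omega⟩ := by
    ext; simp [Fin.rev]
  -- any index with g i > σ equals the top sorted index
  have hsub : ∀ i, σ < g i → i = Tuple.sort g ⟨n-1, by omega⟩ := by
    intro i hi
    set π := Tuple.sort g with hπ
    rw [← π.apply_symm_apply i] at hi ⊢
    congr 1
    by_contra hne
    have hv : (π.symm i : Fin n).val ≠ n-1 := fun h => hne (Fin.ext h)
    have h1 : (π.symm i : Fin n).val ≤ n-2 := by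
      have := (π.symm i).isLt; omega
    have hle : (π.symm i : Fin n) ≤ (⟨n-2, by omega⟩ : Fin n) := by
      rw [Fin.le_def]; exact h1
    have hmono := Tuple.monotone_sort g hle
    simp only [Function.comp_apply] at hmono
    rw [hσg, hrev] at hi
    exact absurd hmono (not_le.2 hi)
  -- quadratic form of Wᴴ*W
  have key : ∀ z : Fin n → ℝ, z ⬝ᵥ ((Wᴴ * W) *ᵥ z) = ∑ i, (W *ᵥ z) i ^ 2 := by
    intro z
    rw [show (Wᴴ : Matrix (Fin n) (Fin n) ℝ) = Wᵀ from rfl]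
    rw [← Matrix.mulVec_mulVec, dotProduct_mulVec, Matrix.vecMul_transpose]
    simp [dotProduct, sq]
  have hunit : ∀ i, (⇑(b i)) ⬝ᵥ (⇑(b i)) = 1 := by
    intro i
    have h4 := b.orthonormal.1 i
    have h3 : (⟪b i, b i⟫) = 1 := by
      rw [real_inner_self_eq_norm_sq, h4]; norm_num
    rw [← h3, PiLp.inner_apply]
    simp [dotProduct, sq]
  have heig : ∀ i, μ i = ∑ k, (W *ᵥ ⇑(b i)) k ^ 2 := by
    intro i
    have h2 := key (⇑(b i))
    rw [hM.mulVec_eigenvectorBasis i, dotProduct_smul] at h2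
    simp only [smul_eq_mul] at h2
    rw [hunit i, mul_one] at h2
    simp at h2; exact h2
  have hμ0 : ∀ i, 0 ≤ μ i := fun i => (heig i).symm ▸ Finset.sum_nonneg fun k _ => sq_nonneg _
  have hμ1 : ∀ i, μ i ≤ 1 := by
    intro i
    rw [heig i]
    calc ∑ k, (W *ᵥ ⇑(b i)) k ^ 2 ≤ ∑ k, ((b i) k) ^ 2 :=
          contraction W hnonneg hrow hcol _
      _ = 1 := by
          have := hunit i
          simpa [dotProduct, sq] using this
  have hgsq : ∀ i, g i ^ 2 = μ i := fun i => Real.sq_sqrt (hμ0 i)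
  -- the linear map
  set f : EuclideanSpace ℝ (Fin n) →ₗ[ℝ] EuclideanSpace ℝ (Fin n) :=
    Matrix.toEuclideanLin (Wᴴ * W) with hf
  have hfsymm : ∀ u v : EuclideanSpace ℝ (Fin n), ⟪f u, v⟫ = ⟪u, f v⟫ :=
    (Matrix.isHermitian_iff_isSymmetric.1 hM)
  have hfb : ∀ i, f (b i) = μ i • b i := by
    intro i
    apply (WithLp.equiv 2 (Fin n → ℝ)).injective
    change (Wᴴ * W) *ᵥ ⇑(b i) = WithLp.equiv 2 (Fin n → ℝ) (μ i • b i)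
    rw [hM.mulVec_eigenvectorBasis i]
    rfl
  -- eigen-expansion of the quadratic form
  have claimE : ∀ z : EuclideanSpace ℝ (Fin n),
      ⟪z, f z⟫ = ∑ i, μ i * (b.repr z i) ^ 2 := by
    intro z
    have hfz : f z = ∑ i, (μ i * b.repr z i) • b i := by
      conv_lhs => rw [← b.sum_repr z]
      rw [map_sum]
      refine Finset.sum_congr rfl fun i _ => ?_
      rw [LinearMap.map_smul, hfb i, smul_smul, mul_comm]
    rw [hfz, inner_sum]
    refine Finset.sum_congr rfl fun i _ => ?_
    rw [real_inner_smul_right, real_inner_comm, ← b.repr_apply_apply]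
    ring
  -- Parseval
  have claimF : ∀ z : EuclideanSpace ℝ (Fin n), ∑ i, (b.repr z i) ^ 2 = ∑ k, (z k) ^ 2 := by
    intro z
    have h1 : ⟪b.repr z, b.repr z⟫ = ⟪z, z⟫ := b.repr.inner_map_map z z
    rw [PiLp.inner_apply, PiLp.inner_apply] at h1
    simpa [sq] using h1
  -- the all-ones vector
  set u : EuclideanSpace ℝ (Fin n) := (WithLp.equiv 2 (Fin n → ℝ)).symm (fun _ => 1) with hu
  have hfu : f u = u := by
    apply (WithLp.equiv 2 (Fin n → ℝ)).injective
    change (Wᴴ * W) *ᵥ (WithLp.equiv 2 (Fin n → ℝ) u) = fun _ => 1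
    rw [hu, Equiv.apply_symm_apply]
    rw [show (Wᴴ : Matrix (Fin n) (Fin n) ℝ) = Wᵀ from rfl, ← Matrix.mulVec_mulVec]
    have hWu : W *ᵥ (fun _ => (1:ℝ)) = fun _ => 1 := by
      funext i; simp [Matrix.mulVec, dotProduct, hrow i]
    have hWtu : Wᵀ *ᵥ (fun _ => (1:ℝ)) = fun _ => 1 := by
      funext j; simp [Matrix.mulVec, dotProduct, Matrix.transpose_apply, hcol j]
    rw [hWu, hWtu]
  set c := b.repr u with hc
  have hcu : ∀ i, μ i * c i = c i := by
    intro i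
    have h1 : ⟪b i, f u⟫ = c i := by rw [hfu, hc, b.repr_apply_apply]
    have h2 : ⟪b i, f u⟫ = μ i * c i := by
      rw [← hfsymm (b i) u, hfb i, real_inner_smul_left, hc, b.repr_apply_apply]
    rw [h1] at h2; exact h2.symm
  -- x as a Euclidean vector
  set z : EuclideanSpace ℝ (Fin n) := (WithLp.equiv 2 (Fin n → ℝ)).symm x with hz
  set a := b.repr z with ha
  have hParse : ∑ i, a i ^ 2 = ∑ k, x k ^ 2 := by
    rw [ha, claimF]
    exact Finset.sum_congr rfl fun k _ => rfl
  have huz : ⟪u, z⟫ = 0 := by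
    rw [PiLp.inner_apply]
    simpa [hu, hz] using hx0
  -- spectral step
  have hspec : ∑ i, μ i * a i ^ 2 ≤ σ ^ 2 * ∑ i, a i ^ 2 := by
    by_cases h1σ : 1 ≤ σ
    · rw [Finset.mul_sum]
      refine Finset.sum_le_sum fun i _ => ?_
      have hμσ : μ i ≤ σ ^ 2 := le_trans (hμ1 i) (by nlinarith)
      exact mul_le_mul_of_nonneg_right hμσ (sq_nonneg _)
    · push_neg at h1σ
      have hune : u ≠ 0 := by
        intro h
        have h7 : u (⟨0, by omega⟩ : Fin n) = 1 := rfl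
        rw [h] at h7
        simpa using h7
      obtain ⟨i₁, hi₁⟩ : ∃ i, c i ≠ 0 := by
        by_contra hall; push_neg at hall
        apply hune
        have h8 : b.repr u = 0 := by
          ext i; simpa using hall i
        exact b.repr.map_eq_zero_iff.1 h8
      have hμi₁ : μ i₁ = 1 :=
        mul_right_cancel₀ hi₁ (by rw [one_mul]; exact hcu i₁)
      have hgi₁ : σ < g i₁ := by
        have : g i₁ = 1 := by rw [hgdef]; simp [hμi₁]
        rw [this]; exact h1σ
      have hi₁top : i₁ = Tuple.sort g ⟨n-1, by omega⟩ := hsub i₁ hgi₁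
      have hcz : ∀ j, j ≠ i₁ → c j = 0 := by
        intro j hj
        by_contra hcj
        have hμj : μ j = 1 := mul_right_cancel₀ hcj (by rw [one_mul]; exact hcu j)
        have hgj : σ < g j := by
          have : g j = 1 := by rw [hgdef]; simp [hμj]
          rw [this]; exact h1σ
        exact hj ((hsub j hgj).trans hi₁top.symm)
      have hai₁ : a i₁ = 0 := by
        have h3 : ⟪u, z⟫ = ∑ i, c i * a i := by
          rw [← b.repr.inner_map_map u z, PiLp.inner_apply, ← hc, ← ha]
          simp; exact Finset.sum_congr rfl fun k _ => mul_comm _ _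
        rw [huz] at h3
        have h4 : ∑ i, c i * a i = c i₁ * a i₁ :=
          Finset.sum_eq_single i₁ (fun j _ hj => by rw [hcz j hj, zero_mul])
            (fun h => absurd (Finset.mem_univ i₁) h)
        have h5 : c i₁ * a i₁ = 0 := by rw [← h4, ← h3]
        exact (mul_eq_zero.1 h5).resolve_left hi₁
      rw [Finset.mul_sum]
      refine Finset.sum_le_sum fun i _ => ?_
      by_cases hii : i = i₁
      · subst hii; rw [hai₁]; simp
      · have hgi : g i ≤ σ := by
          by_contra hgt; push_neg at hgt
          exact hii ((hsub i hgt).trans hi₁top.symm)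
        have hμσ : μ i ≤ σ ^ 2 := by
          rw [← hgsq i]
          exact pow_le_pow_left₀ (Real.sqrt_nonneg _) hgi 2
        exact mul_le_mul_of_nonneg_right hμσ (sq_nonneg _)
  -- assemble
  set S := ∑ i, x i ^ 2 with hS
  have hS0 : 0 ≤ S := Finset.sum_nonneg fun i _ => sq_nonneg _
  have hWx2 : ∑ i, (W *ᵥ x) i ^ 2 ≤ σ ^ 2 * S := by
    have h5 := key x
    have h6 : x ⬝ᵥ ((Wᴴ * W) *ᵥ x) = ⟪z, f z⟫ := by
      rw [PiLp.inner_apply]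
      exact Finset.sum_congr rfl fun i _ => mul_comm _ _
    calc ∑ i, (W *ᵥ x) i ^ 2 = ⟪z, f z⟫ := by rw [← h6, h5]
      _ = ∑ i, μ i * a i ^ 2 := by rw [claimE z, ha]
      _ ≤ σ ^ 2 * ∑ i, a i ^ 2 := hspec
      _ = σ ^ 2 * S := by rw [hParse]
  have hL : ∑ i, ∑ j, W i j * x i * x j = ∑ i, x i * (W *ᵥ x) i := by
    refine Finset.sum_congr rfl fun i _ => ?_
    rw [Matrix.mulVec, dotProduct, Finset.mul_sum]
    exact Finset.sum_congr rfl fun j _ => by ring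
  have hCS : (∑ i, x i * (W *ᵥ x) i) ^ 2 ≤ S * ∑ i, (W *ᵥ x) i ^ 2 :=
    Finset.sum_mul_sq_le_sq_mul_sq _ _ _
  have hfinal : (∑ i, x i * (W *ᵥ x) i) ^ 2 ≤ (σ * S) ^ 2 := by nlinarith
  have hσS : 0 ≤ σ * S := mul_nonneg hσ0 hS0
  calc ∑ i, ∑ j, W i j * x i * x j = ∑ i, x i * (W *ᵥ x) i := hL
    _ ≤ |∑ i, x i * (W *ᵥ x) i| := le_abs_self _
    _ = Real.sqrt ((∑ i, x i * (W *ᵥ x) i) ^ 2) := (Real.sqrt_sq_eq_abs _).symm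
    _ ≤ Real.sqrt ((σ * S) ^ 2) := Real.sqrt_le_sqrt hfinal
    _ = |σ * S| := Real.sqrt_sq_eq_abs _
    _ = σ * S := abs_of_nonneg hσS
end core



/-- Euclidean Poincaré-type inequality for a symmetric doubly stochastic matrix:
the weighted sum of pairwise squared distances dominates `2(1 - σ₂(W))` times the variance. -/
theorem weighted_pairwise_ge_variance {n d : ℕ} (hn : 2 ≤ n)
    (W : Matrix (Fin n) (Fin n) ℝ) (hsymm : W.IsSymm)
    (hnonneg : ∀ i j, 0 ≤ W i j)
    (hrow : ∀ i, ∑ j, W i j = 1) (hcol : ∀ j, ∑ i, W i j = 1)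
    (y : Fin n → EuclideanSpace ℝ (Fin d))
    (ybar : EuclideanSpace ℝ (Fin d)) (hybar : ybar = ((n : ℝ)⁻¹) • ∑ i, y i) :
    ∑ i, ∑ j, W i j * ‖y i - y j‖ ^ 2
      ≥ 2 * (1 - singularValue W ⟨1, by omega⟩) * ∑ i, ‖y i - ybar‖ ^ 2 := by
  classical
  set σ : ℝ := singularValue W ⟨1, by omega⟩ with hσdef
  set z : Fin n → EuclideanSpace ℝ (Fin d) := fun i => y i - ybar with hzdef
  have hyz : ∀ i j, y i - y j = z i - z j := fun i j => by
    simp only [hzdef]; abel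
  have hnormsq : ∀ w : EuclideanSpace ℝ (Fin d), ‖w‖ ^ 2 = ∑ k, w k ^ 2 := by
    intro w
    rw [← real_inner_self_eq_norm_sq, PiLp.inner_apply]
    simp [sq]
  have happly : ∀ k, ((∑ i, y i : EuclideanSpace ℝ (Fin d))) k = ∑ i, y i k := by
    intro k
    have h := map_sum (WithLp.linearEquiv 2 ℝ (Fin d → ℝ)) y Finset.univ
    calc (∑ i, y i : EuclideanSpace ℝ (Fin d)) k
        = (WithLp.linearEquiv 2 ℝ (Fin d → ℝ) (∑ i, y i)) k := rfl
      _ = (∑ i, WithLp.linearEquiv 2 ℝ (Fin d → ℝ) (y i)) k := by rw [h]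
      _ = ∑ i, y i k := by rw [Finset.sum_apply]; exact Finset.sum_congr rfl fun i _ => rfl
  have hsum0 : ∀ k, ∑ i, (z i) k = 0 := by
    intro k
    have hybark : ybar k = (n : ℝ)⁻¹ * ∑ i, y i k := by
      rw [hybar]
      calc (((n : ℝ)⁻¹ • ∑ i, y i : EuclideanSpace ℝ (Fin d))) k
          = (n : ℝ)⁻¹ * ((∑ i, y i : EuclideanSpace ℝ (Fin d)) k) := rfl
        _ = (n : ℝ)⁻¹ * ∑ i, y i k := by rw [happly]
    have h1 : ∑ i, (z i) k = (∑ i, y i k) - n * ybar k := by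
      have hik : ∀ i : Fin n, (z i) k = y i k - ybar k := fun i => rfl
      simp_rw [hik]
      rw [Finset.sum_sub_distrib, Finset.sum_const, Finset.card_univ, Fintype.card_fin,
        nsmul_eq_mul]
    rw [h1, hybark]
    have hnne : (n : ℝ) ≠ 0 := by positivity
    field_simp
    ring
  have hexp : ∀ i j, ‖y i - y j‖ ^ 2 = ‖z i‖ ^ 2 + ‖z j‖ ^ 2 - 2 * ⟪z i, z j⟫ := by
    intro i j
    rw [hyz i j, norm_sub_sq_real]
    ring
  have hA : ∑ i, ∑ j, W i j * ‖z i‖ ^ 2 = ∑ i, ‖z i‖ ^ 2 := by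
    refine Finset.sum_congr rfl fun i _ => ?_
    rw [← Finset.sum_mul, hrow i, one_mul]
  have hB : ∑ i, ∑ j, W i j * ‖z j‖ ^ 2 = ∑ j, ‖z j‖ ^ 2 := by
    rw [Finset.sum_comm]
    refine Finset.sum_congr rfl fun j _ => ?_
    rw [← Finset.sum_mul, hcol j, one_mul]
  have hsplit : ∑ i, ∑ j, W i j * ‖y i - y j‖ ^ 2
      = (∑ i, ∑ j, W i j * ‖z i‖ ^ 2) + (∑ i, ∑ j, W i j * ‖z j‖ ^ 2)
        - 2 * ∑ i, ∑ j, W i j * ⟪z i, z j⟫ := by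
    rw [Finset.mul_sum, ← Finset.sum_add_distrib, ← Finset.sum_sub_distrib]
    refine Finset.sum_congr rfl fun i _ => ?_
    rw [Finset.mul_sum, ← Finset.sum_add_distrib, ← Finset.sum_sub_distrib]
    refine Finset.sum_congr rfl fun j _ => ?_
    rw [hexp i j]; ring
  have hQ : ∑ i, ∑ j, W i j * ⟪z i, z j⟫ ≤ σ * ∑ i, ‖z i‖ ^ 2 := by
    have h1 : ∀ i j, (⟪z i, z j⟫ : ℝ) = ∑ k, (z i) k * (z j) k := fun i j => by
      rw [PiLp.inner_apply]; simp; exact Finset.sum_congr rfl fun k _ => mul_comm _ _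
    calc ∑ i, ∑ j, W i j * ⟪z i, z j⟫
        = ∑ i, ∑ k, ∑ j, W i j * (z i) k * (z j) k := by
          refine Finset.sum_congr rfl fun i _ => ?_
          rw [← Finset.sum_comm]
          refine Finset.sum_congr rfl fun j _ => ?_
          rw [h1 i j, Finset.mul_sum]
          exact Finset.sum_congr rfl fun k _ => by ring
      _ = ∑ k, ∑ i, ∑ j, W i j * (z i) k * (z j) k := Finset.sum_comm
      _ ≤ ∑ k, σ * ∑ i, ((z i) k) ^ 2 := by
          refine Finset.sum_le_sum fun k _ => ?_
          exact core_bound hn W hnonneg hrow hcol (fun i => (z i) k) (hsum0 k)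
      _ = σ * ∑ i, ‖z i‖ ^ 2 := by
          rw [← Finset.mul_sum, Finset.sum_comm]
          congr 1
          exact Finset.sum_congr rfl fun i _ => (hnormsq (z i)).symm
  have hgoalz : ∑ i, ‖y i - ybar‖ ^ 2 = ∑ i, ‖z i‖ ^ 2 := rfl
  rw [ge_iff_le, hgoalz, hsplit, hA, hB]
  have hring : 2 * (1 - σ) * ∑ i, ‖z i‖ ^ 2
      = 2 * (∑ i, ‖z i‖ ^ 2) - 2 * (σ * ∑ i, ‖z i‖ ^ 2) := by ring
  rw [hring]
  linarith [hQ]
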